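/- For every positive integer d and every positive integer δ, the combinatorial logarithmic Severi degree refines over long-edge graphs with distributions: Q^{d,δ} = ∑_{D : δ(D) = δ} Q^d(D), where the sum is over all encodings D with cogenus δ and has only finitely many nonzero terms. -/

import Mathlib

open scoped Classical

/-- A quadruple `(a, b, w, i)` in the index set `X`: `a ≤ i < b`, `w ≥ 1`,
and the edge is not short. -/
def ValidX (x : ℕ × ℕ × ℕ × ℕ) : Prop :=
  x.1 ≤ x.2.2.2 ∧ x.2.2.2 < x.2.1 ∧ 1 ≤ x.2.2.1 ∧ ¬ (x.2.1 = x.1 + 1 ∧ x.2.2.1 = 1)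

/-- A finitely supported function `D : X → ℕ` encoding a long-edge graph with
a distribution: `D (a,b,w,i)` counts the edges with endpoints `a < b`, weight `w`,
assigned to the interval `[i, i+1]`. -/
def IsEncoding (D : (ℕ × ℕ × ℕ × ℕ) →₀ ℕ) : Prop :=
  ∀ x ∈ D.support, ValidX x

/-- The cogenus `δ(D) = ∑ D(a,b,w,i) ((b−a)w − 1)`. -/
def cogD (D : (ℕ × ℕ × ℕ × ℕ) →₀ ℕ) : ℕ :=
  ∑ x ∈ D.support, D x * ((x.2.1 - x.1) * x.2.2.1 - 1)

/-- `w_j(D)`: total weight over the interval `[j, j+1]`. -/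
def wjD (D : (ℕ × ℕ × ℕ × ℕ) →₀ ℕ) (j : ℕ) : ℕ :=
  ∑ x ∈ D.support.filter (fun x => x.1 ≤ j ∧ j < x.2.1), x.2.2.1 * D x

/-- `m_j(D)`: number of edges assigned to the interval `[j, j+1]`. -/
def mjD (D : (ℕ × ℕ × ℕ × ℕ) →₀ ℕ) (j : ℕ) : ℕ :=
  ∑ x ∈ D.support.filter (fun x => x.2.2.2 = j), D x

/-- `D` is allowable for `d`. -/
def AllowD (d : ℕ) (D : (ℕ × ℕ × ℕ × ℕ) →₀ ℕ) : Prop :=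
  (∀ x ∈ D.support, x.2.1 ≤ d + 1) ∧
    (∀ x ∈ D.support, x.2.1 = d + 1 → x.2.2.1 = 1) ∧
    ∀ j : ℕ, wjD D j ≤ j

/-- The multiplicity `μ(D) = ∏ w^{2·D(a,b,w,i)}`. -/
noncomputable def muD (D : (ℕ × ℕ × ℕ × ℕ) →₀ ℕ) : ℚ :=
  ∏ x ∈ D.support, (x.2.2.1 : ℚ) ^ (2 * D x)

/-- `α(D) = ∏ (D(a,b,w,i))!`. -/
noncomputable def alphaD (D : (ℕ × ℕ × ℕ × ℕ) →₀ ℕ) : ℚ :=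
  ∏ x ∈ D.support, (Nat.factorial (D x) : ℚ)

/-- `N^d(D) = (μ(D)/α(D)) ∏_{j∈ℕ} (j − w_j(D) + m_j(D))_{m_j(D)}` if `D` is allowable
for `d`, and `0` otherwise. -/
noncomputable def Nd (d : ℕ) (D : (ℕ × ℕ × ℕ × ℕ) →₀ ℕ) : ℚ :=
  if AllowD d D then
    (muD D / alphaD D) *
      ∏ᶠ j : ℕ, (((descPochhammer ℤ (mjD D j)).eval
        ((j : ℤ) - (wjD D j : ℤ) + (mjD D j : ℤ)) : ℤ) : ℚ)
  else 0

/-- The combinatorial Severi degree `N^{d,δ}`. -/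
noncomputable def NSev (d : ℕ) (δ : ℕ) : ℚ :=
  if δ = 0 then 1
  else ∑ᶠ (D : (ℕ × ℕ × ℕ × ℕ) →₀ ℕ) (_ : IsEncoding D ∧ cogD D = δ), Nd d D

/-- The combinatorial logarithmic Severi degree
`Q^{d,δ} = ∑ (−1)^{p−1}/p · N^{d,δ_1} ⋯ N^{d,δ_p}`, summed over ordered sequences of
positive integers with `δ_1 + ⋯ + δ_p = δ`. -/
noncomputable def QSev (d : ℕ) (δ : ℕ) : ℚ :=
  ∑ᶠ (l : List ℕ) (_ : l.sum = δ ∧ ∀ i ∈ l, 0 < i),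
    (-1 : ℚ) ^ (l.length - 1) / (l.length : ℚ) * (l.map (NSev d)).prod

/-- The canonical realization of the encoding `D`: a finite index set of labeled
edges, each `x ∈ X` appearing exactly `D x` times (labeled by `0, …, D x − 1`). -/
noncomputable def TofD (D : (ℕ × ℕ × ℕ × ℕ) →₀ ℕ) : Finset ((ℕ × ℕ × ℕ × ℕ) × ℕ) :=
  D.support.biUnion (fun x => (Finset.range (D x)).image (fun n => (x, n)))

/-- `w_j(E)` for a set `E` of labeled edges. -/
def wjE (E : Finset ((ℕ × ℕ × ℕ × ℕ) × ℕ)) (j : ℕ) : ℕ :=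
  ∑ t ∈ E.filter (fun t => t.1.1 ≤ j ∧ j < t.1.2.1), t.1.2.2.1

/-- `m_j(E)` for a set `E` of labeled edges. -/
def mjE (E : Finset ((ℕ × ℕ × ℕ × ℕ) × ℕ)) (j : ℕ) : ℕ :=
  (E.filter (fun t => t.1.2.2.2 = j)).card

/-- A set `E` of labeled edges is allowable for `d`. -/
def AllowE (d : ℕ) (E : Finset ((ℕ × ℕ × ℕ × ℕ) × ℕ)) : Prop :=
  (∀ t ∈ E, t.1.2.1 ≤ d + 1) ∧ (∀ t ∈ E, t.1.2.1 = d + 1 → t.1.2.2.1 = 1) ∧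
    ∀ j : ℕ, wjE E j ≤ j

/-- `N_*^d(E) = ∏_{j∈ℕ} (j − w_j(E) + m_j(E))_{m_j(E)}` if `E` is allowable for `d`,
and `0` otherwise. -/
noncomputable def NstarE (d : ℕ) (E : Finset ((ℕ × ℕ × ℕ × ℕ) × ℕ)) : ℤ :=
  if AllowE d E then
    ∏ᶠ j : ℕ, (descPochhammer ℤ (mjE E j)).eval
      ((j : ℤ) - (wjE E j : ℤ) + (mjE E j : ℤ))
  else 0

/-- `P` is a partition of the finite set `T` into nonempty blocks. -/
def IsPartitionOf (T : Finset ((ℕ × ℕ × ℕ × ℕ) × ℕ))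
    (P : Finset (Finset ((ℕ × ℕ × ℕ × ℕ) × ℕ))) : Prop :=
  (∀ E ∈ P, E.Nonempty ∧ E ⊆ T) ∧ ∀ x ∈ T, ∃! E, E ∈ P ∧ x ∈ E

/-- `Q_*^d(D) = ∑_P (−1)^{|P|−1}(|P|−1)! ∏_{E∈P} N_*^d(E)`, summed over partitions of
the canonical realization of `D` into nonempty blocks. -/
noncomputable def QstarD (d : ℕ) (D : (ℕ × ℕ × ℕ × ℕ) →₀ ℕ) : ℤ :=
  ∑ᶠ (P : Finset (Finset ((ℕ × ℕ × ℕ × ℕ) × ℕ))) (_ : IsPartitionOf (TofD D) P),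
    (-1 : ℤ) ^ (P.card - 1) * (Nat.factorial (P.card - 1) : ℤ) * ∏ E ∈ P, NstarE d E

/-- `Q^d(D) = (μ(D)/α(D)) · Q_*^d(D)`. -/
noncomputable def Qd (d : ℕ) (D : (ℕ × ℕ × ℕ × ℕ) →₀ ℕ) : ℚ :=
  (muD D / alphaD D) * (QstarD d D : ℚ)

/-! ### Auxiliary development -/

section Aux

abbrev XQ := ℕ × ℕ × ℕ × ℕ
abbrev EncT := XQ →₀ ℕ
abbrev LTy := XQ × ℕ

/-- cogenus contribution of a single edge type -/
def cx (x : XQ) : ℕ := (x.2.1 - x.1) * x.2.2.1 - 1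

lemma one_le_cx {x : XQ} (hx : ValidX x) : 1 ≤ cx x := by
  obtain ⟨h1, h2, h3, h4⟩ := hx
  have hb : x.1 + 1 ≤ x.2.1 := by omega
  rcases Nat.lt_or_ge (x.1 + 1) x.2.1 with h | h
  · have : 2 ≤ x.2.1 - x.1 := by omega
    have : 2 * 1 ≤ (x.2.1 - x.1) * x.2.2.1 := Nat.mul_le_mul this h3
    unfold cx; omega
  · have hbb : x.2.1 = x.1 + 1 := by omega
    have hw : 2 ≤ x.2.2.1 := by
      rcases Nat.lt_or_ge x.2.2.1 2 with h' | h'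
      · exact absurd ⟨hbb, by omega⟩ h4
      · exact h'
    have : x.2.1 - x.1 = 1 := by omega
    unfold cx; rw [this, one_mul]; omega

lemma cogD_eq_sum (D : EncT) {s : Finset XQ} (hs : D.support ⊆ s) :
    cogD D = ∑ x ∈ s, D x * cx x := by
  rw [cogD]
  exact Finset.sum_subset hs fun x _ hx => by
    simp [Finsupp.notMem_support_iff.mp hx]

lemma cogD_add (D1 D2 : EncT) : cogD (D1 + D2) = cogD D1 + cogD D2 := by
  rw [cogD_eq_sum (D1 + D2) (s := D1.support ∪ D2.support) Finsupp.support_add,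
    cogD_eq_sum D1 (s := D1.support ∪ D2.support) Finset.subset_union_left,
    cogD_eq_sum D2 (s := D1.support ∪ D2.support) Finset.subset_union_right,
    ← Finset.sum_add_distrib]
  refine Finset.sum_congr rfl fun x _ => ?_
  simp [add_mul]

lemma cogD_finsetSum {ι : Type*} (s : Finset ι) (t : ι → EncT) :
    cogD (∑ k ∈ s, t k) = ∑ k ∈ s, cogD (t k) := by
  induction s using Finset.cons_induction with
  | empty => simp [cogD]
  | cons a s ha ih => rw [Finset.sum_cons, Finset.sum_cons, cogD_add, ih]

lemma le_cogD (D : EncT) (hD : IsEncoding D) (x : XQ) : D x ≤ cogD D := by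
  by_cases hx : x ∈ D.support
  · calc D x = D x * 1 := (mul_one _).symm
    _ ≤ D x * cx x := Nat.mul_le_mul_left _ (one_le_cx (hD x hx))
    _ ≤ ∑ y ∈ D.support, D y * cx y :=
      Finset.single_le_sum (f := fun y => D y * cx y) (fun y _ => Nat.zero_le _) hx
    _ = cogD D := rfl
  · simp [Finsupp.notMem_support_iff.mp hx]

lemma cogD_pos (D : EncT) (hD : IsEncoding D) (h0 : D ≠ 0) : 0 < cogD D := by
  obtain ⟨x, hx⟩ := Finsupp.support_nonempty_iff.mpr h0
  have := le_cogD D hD x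
  have := Finsupp.mem_support_iff.mp hx
  omega

lemma cogD_zero_iff (D : EncT) (hD : IsEncoding D) : cogD D = 0 ↔ D = 0 := by
  constructor
  · intro h
    by_contra h0
    exact absurd h (by have := cogD_pos D hD h0; omega)
  · intro h; simp [h, cogD]

/-- the encoding of a finite set of labeled edges -/
noncomputable def encF (E : Finset LTy) : EncT := ∑ t ∈ E, Finsupp.single t.1 1

lemma encF_apply (E : Finset LTy) (x : XQ) :
    encF E x = (E.filter (fun t => t.1 = x)).card := by
  rw [encF, Finset.sum_apply', Finset.card_filter]
  refine Finset.sum_congr rfl fun t _ => ?_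
  simp [Finsupp.single_apply]

lemma encF_empty : encF ∅ = 0 := by simp [encF]

lemma encF_union (E F : Finset LTy) (h : Disjoint E F) :
    encF (E ∪ F) = encF E + encF F := by
  rw [encF, encF, encF, Finset.sum_union h]

lemma encF_mono {E F : Finset LTy} (h : E ⊆ F) : encF E ≤ encF F := by
  intro x
  rw [encF_apply, encF_apply]
  exact Finset.card_le_card (Finset.filter_subset_filter _ h)

lemma encF_sdiff {E T : Finset LTy} (h : E ⊆ T) :
    encF (T \ E) = encF T - encF E := by
  ext x
  rw [Finsupp.tsub_apply, encF_apply, encF_apply, encF_apply]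
  have hset : (T \ E).filter (fun t => t.1 = x)
      = T.filter (fun t => t.1 = x) \ E.filter (fun t => t.1 = x) := by
    ext t; simp only [Finset.mem_filter, Finset.mem_sdiff]; tauto
  rw [hset]
  exact Finset.card_sdiff_of_subset (Finset.filter_subset_filter _ h)

lemma mem_support_encF {E : Finset LTy} {x : XQ} :
    x ∈ (encF E).support ↔ ∃ t ∈ E, t.1 = x := by
  rw [Finsupp.mem_support_iff, encF_apply]
  rw [Finset.card_ne_zero, Finset.filter_nonempty_iff]

lemma encF_eq_zero_iff {E : Finset LTy} : encF E = 0 ↔ E = ∅ := by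
  constructor
  · intro h
    rw [Finset.eq_empty_iff_forall_notMem]
    intro t ht
    have : t.1 ∈ (encF E).support := mem_support_encF.mpr ⟨t, ht, rfl⟩
    rw [h] at this; simp at this
  · rintro rfl; exact encF_empty

lemma encF_card (E : Finset LTy) : E.card = ∑ x ∈ (encF E).support, encF E x := by
  have hmap : ∀ t ∈ E, t.1 ∈ (encF E).support := fun t ht =>
    mem_support_encF.mpr ⟨t, ht, rfl⟩
  calc E.card = ∑ t ∈ E, 1 := by simp
  _ = ∑ x ∈ (encF E).support, ∑ t ∈ E.filter (fun t => t.1 = x), 1 :=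
    (Finset.sum_fiberwise_of_maps_to hmap _).symm
  _ = ∑ x ∈ (encF E).support, encF E x := by
    refine Finset.sum_congr rfl fun x _ => ?_
    rw [encF_apply]; simp

lemma sum_fiber_weight (E : Finset LTy) (q : XQ → Prop) (f : XQ → ℕ) :
    ∑ t ∈ E.filter (fun t => q t.1), f t.1
      = ∑ x ∈ (encF E).support.filter q, f x * encF E x := by
  classical
  have hmap : ∀ t ∈ E.filter (fun t => q t.1), t.1 ∈ (encF E).support.filter q := by
    intro t ht
    rw [Finset.mem_filter] at ht ⊢
    exact ⟨mem_support_encF.mpr ⟨t, ht.1, rfl⟩, ht.2⟩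
  rw [← Finset.sum_fiberwise_of_maps_to hmap (fun t => f t.1)]
  refine Finset.sum_congr rfl fun x hx => ?_
  rw [Finset.mem_filter] at hx
  have hset : (E.filter (fun t => q t.1)).filter (fun t => t.1 = x)
      = E.filter (fun t => t.1 = x) := by
    ext t
    simp only [Finset.mem_filter, and_assoc]
    constructor
    · rintro ⟨h1, _, h3⟩; exact ⟨h1, h3⟩
    · rintro ⟨h1, h3⟩; exact ⟨h1, by rw [h3]; exact hx.2, h3⟩
  rw [hset]
  calc ∑ t ∈ E.filter (fun t => t.1 = x), f t.1
      = ∑ t ∈ E.filter (fun t => t.1 = x), f x := by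
        refine Finset.sum_congr rfl fun t ht => by
          rw [(Finset.mem_filter.mp ht).2]
  _ = f x * encF E x := by rw [Finset.sum_const, encF_apply]; ring

lemma wjE_eq (E : Finset LTy) (j : ℕ) : wjE E j = wjD (encF E) j := by
  rw [wjE, wjD]
  have h := sum_fiber_weight E (fun x => x.1 ≤ j ∧ j < x.2.1) (fun x => x.2.2.1)
  convert h using 2 <;> congr!

lemma mjE_eq (E : Finset LTy) (j : ℕ) : mjE E j = mjD (encF E) j := by
  have h := sum_fiber_weight E (fun x => x.2.2.2 = j) (fun _ => 1)
  simp only [one_mul] at h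
  rw [mjE, Finset.card_eq_sum_ones, mjD]
  convert h using 2 <;> congr!

lemma AllowE_iff (d : ℕ) (E : Finset LTy) : AllowE d E ↔ AllowD d (encF E) := by
  unfold AllowE AllowD
  constructor
  · rintro ⟨h1, h2, h3⟩
    refine ⟨?_, ?_, fun j => by rw [← wjE_eq]; exact h3 j⟩
    · intro x hx
      obtain ⟨t, ht, rfl⟩ := mem_support_encF.mp hx
      exact h1 t ht
    · intro x hx
      obtain ⟨t, ht, rfl⟩ := mem_support_encF.mp hx
      exact h2 t ht
  · rintro ⟨h1, h2, h3⟩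
    refine ⟨?_, ?_, fun j => by rw [wjE_eq]; exact h3 j⟩
    · intro t ht
      exact h1 t.1 (mem_support_encF.mpr ⟨t, ht, rfl⟩)
    · intro t ht
      exact h2 t.1 (mem_support_encF.mpr ⟨t, ht, rfl⟩)

end Aux
section Aux2

/-- `N_*` as a function of the encoding. -/
noncomputable def NZ (d : ℕ) (D : EncT) : ℤ :=
  if AllowD d D then
    ∏ᶠ j : ℕ, (descPochhammer ℤ (mjD D j)).eval
      ((j : ℤ) - (wjD D j : ℤ) + (mjD D j : ℤ))
  else 0

lemma NstarE_eq (d : ℕ) (E : Finset LTy) : NstarE d E = NZ d (encF E) := by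
  unfold NstarE NZ
  simp only [wjE_eq, mjE_eq, AllowE_iff]

lemma Nd_eq (d : ℕ) (D : EncT) : Nd d D = muD D / alphaD D * (NZ d D : ℚ) := by
  rw [Nd, NZ]
  split
  · congr 1
    exact ((Int.castRingHom ℚ).toMonoidHom.map_finprod_of_injective
      Int.cast_injective _).symm
  · simp

/-- `α` as a natural number. -/
def αn (D : EncT) : ℕ := D.prod fun _ n => Nat.factorial n

lemma αn_eq_prod (D : EncT) {s : Finset XQ} (hs : D.support ⊆ s) :
    αn D = ∏ x ∈ s, Nat.factorial (D x) := by
  rw [αn, Finsupp.prod]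
  exact Finset.prod_subset hs fun x _ hx => by
    simp [Finsupp.notMem_support_iff.mp hx]

lemma αn_pos (D : EncT) : 0 < αn D :=
  Finset.prod_pos fun x _ => Nat.factorial_pos _

lemma alphaD_eq (D : EncT) : alphaD D = (αn D : ℚ) := by
  rw [alphaD, αn, Finsupp.prod, Nat.cast_prod]

lemma alphaD_ne_zero (D : EncT) : alphaD D ≠ 0 := by
  rw [alphaD_eq]
  exact_mod_cast (αn_pos D).ne'

lemma muD_add (D1 D2 : EncT) : muD (D1 + D2) = muD D1 * muD D2 := by
  have h : ∀ D : EncT, muD D = D.prod (fun x n => (x.2.2.1 : ℚ) ^ (2 * n)) := fun D => rfl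
  rw [h, h, h]
  exact Finsupp.prod_add_index (fun a _ => by simp) (fun a _ b1 b2 => by
    rw [Nat.mul_add, pow_add])

lemma muD_sum {ι : Type*} (s : Finset ι) (t : ι → EncT) :
    muD (∑ k ∈ s, t k) = ∏ k ∈ s, muD (t k) := by
  induction s using Finset.cons_induction with
  | empty => simp [muD]
  | cons a s ha ih => rw [Finset.sum_cons, Finset.prod_cons, muD_add, ih]

/-- product of binomial coefficients -/
def ch (N D : EncT) : ℕ := ∏ x ∈ N.support ∪ D.support, (N x).choose (D x)

lemma ch_eq_prod (N D : EncT) {s : Finset XQ} (hs : N.support ∪ D.support ⊆ s) :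
    ch N D = ∏ x ∈ s, (N x).choose (D x) := by
  refine Finset.prod_subset hs fun x _ hx => ?_
  simp only [Finset.mem_union, Finsupp.mem_support_iff, not_or, not_not] at hx
  simp [hx.1, hx.2]

lemma ch_zero_left (D : EncT) : ch 0 D = if D = 0 then 1 else 0 := by
  split
  · subst ‹D = 0›; simp [ch]
  · rename_i h
    obtain ⟨x, hx⟩ := Finsupp.support_nonempty_iff.mpr h
    rw [ch]
    refine Finset.prod_eq_zero (Finset.mem_union_right _ hx) ?_
    have hDx := Finsupp.mem_support_iff.mp hx
    simp only [Finsupp.coe_zero, Pi.zero_apply]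
    exact Nat.choose_eq_zero_of_lt (by omega)

lemma ch_mul {N D : EncT} (h : D ≤ N) :
    ch N D * (αn D * αn (N - D)) = αn N := by
  have hDs : D.support ⊆ N.support := by
    intro x hx
    rw [Finsupp.mem_support_iff] at hx ⊢
    have := (Finsupp.le_def.mp h) x
    omega
  have hNDs : (N - D).support ⊆ N.support := by
    intro x hx
    rw [Finsupp.mem_support_iff] at hx ⊢
    rw [Finsupp.tsub_apply] at hx
    omega
  rw [ch_eq_prod N D (s := N.support) (Finset.union_subset subset_rfl hDs),
    αn_eq_prod D hDs, αn_eq_prod (N - D) hNDs, αn_eq_prod N subset_rfl,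
    ← Finset.prod_mul_distrib, ← Finset.prod_mul_distrib]
  refine Finset.prod_congr rfl fun x _ => ?_
  rw [Finsupp.tsub_apply, ← mul_assoc]
  exact Nat.choose_mul_factorial_mul_factorial (Finsupp.le_def.mp h x)

lemma ch_succ (N : EncT) (D : EncT) (y : XQ) :
    ch (N + Finsupp.single y 1) D
      = ch N D + (if Finsupp.single y 1 ≤ D then ch N (D - Finsupp.single y 1) else 0) := by
  classical
  set e : EncT := Finsupp.single y 1 with he
  have hey : ∀ x, e x = if x = y then 1 else 0 := fun x => by
    rw [he, Finsupp.single_apply]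
    simp [eq_comm]
  have hle : e ≤ D ↔ 1 ≤ D y := by
    constructor
    · intro h'; have := Finsupp.le_def.mp h' y; rw [hey] at this; simpa using this
    · intro h'
      rw [Finsupp.le_def]
      intro x
      rw [hey]
      split
      · subst ‹x = y›; exact h'
      · exact Nat.zero_le _
  set s : Finset XQ := insert y (N.support ∪ D.support) with hs
  have hsub : ∀ (M M' : EncT), M.support ⊆ N.support → M'.support ⊆ D.support →
      M.support ∪ M'.support ⊆ s := by
    intro M M' h1 h2
    refine Finset.union_subset ?_ ?_ <;> intro x hx <;> rw [hs]
    · exact Finset.mem_insert_of_mem (Finset.mem_union_left _ (h1 hx))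
    · exact Finset.mem_insert_of_mem (Finset.mem_union_right _ (h2 hx))
  have hNe : (N + e).support ⊆ insert y N.support := by
    intro x hx
    rw [Finsupp.mem_support_iff, Finsupp.add_apply, hey] at hx
    by_cases hxy : x = y
    · rw [hxy]; exact Finset.mem_insert_self _ _
    · rw [if_neg hxy, add_zero] at hx
      exact Finset.mem_insert_of_mem (Finsupp.mem_support_iff.mpr hx)
  have hs1 : (N + e).support ∪ D.support ⊆ s := by
    refine Finset.union_subset ?_ ?_ <;> intro x hx
    · rcases Finset.mem_insert.mp (hNe hx) with h' | h'
      · rw [hs, h']; exact Finset.mem_insert_self _ _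
      · exact Finset.mem_insert_of_mem (Finset.mem_union_left _ h')
    · exact Finset.mem_insert_of_mem (Finset.mem_union_right _ hx)
  have hys : y ∈ s := Finset.mem_insert_self _ _
  have key : ∀ (M : EncT) (k : ℕ), (∀ x ∈ s, x ≠ y → M x = D x) → M y = k →
      M.support ⊆ s →
      ∏ x ∈ s, (N x).choose (M x)
        = (N y).choose k * ∏ x ∈ s.erase y, (N x).choose (D x) := by
    intro M k hMD hMy hMs
    rw [← Finset.mul_prod_erase s _ hys, hMy]
    congr 1
    refine Finset.prod_congr rfl fun x hx => ?_
    rw [hMD x (Finset.mem_of_mem_erase hx) (Finset.ne_of_mem_erase hx)]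
  have hch : ch (N + e) D = ∏ x ∈ s, ((N + e) x).choose (D x) := ch_eq_prod _ _ hs1
  have hchN : ch N D = ∏ x ∈ s, (N x).choose (D x) :=
    ch_eq_prod _ _ (hsub N D subset_rfl subset_rfl)
  rw [hch, hchN]
  have hNe_apply : ∀ x, (N + e) x = if x = y then N x + 1 else N x := by
    intro x
    rw [Finsupp.add_apply, hey]
    split <;> omega
  have step1 : ∏ x ∈ s, ((N + e) x).choose (D x)
      = (N y + 1).choose (D y) * ∏ x ∈ s.erase y, (N x).choose (D x) := by
    rw [← Finset.mul_prod_erase s _ hys, hNe_apply y, if_pos rfl]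
    congr 1
    refine Finset.prod_congr rfl fun x hx => ?_
    rw [hNe_apply x, if_neg (Finset.ne_of_mem_erase hx)]
  have step2 : ∏ x ∈ s, (N x).choose (D x)
      = (N y).choose (D y) * ∏ x ∈ s.erase y, (N x).choose (D x) := by
    rw [← Finset.mul_prod_erase s _ hys]
  rw [step1, step2]
  rcases Nat.eq_zero_or_pos (D y) with h0 | hpos
  · rw [if_neg (by rw [hle]; omega), h0]
    simp
  · rw [if_pos (hle.mpr hpos)]
    have hDe : ∀ x, (D - e) x = if x = y then D y - 1 else D x := by
      intro x
      rw [Finsupp.tsub_apply, hey]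
      rcases eq_or_ne x y with rfl | hxy
      · rw [if_pos rfl, if_pos rfl]
      · rw [if_neg hxy, if_neg hxy, Nat.sub_zero]
    have hDes : (D - e).support ⊆ D.support := by
      intro x hx
      rw [Finsupp.mem_support_iff] at hx ⊢
      rw [Finsupp.tsub_apply] at hx
      omega
    have hch2 : ch N (D - e) = ∏ x ∈ s, (N x).choose ((D - e) x) :=
      ch_eq_prod _ _ (hsub N (D - e) subset_rfl hDes)
    have step3 : ∏ x ∈ s, (N x).choose ((D - e) x)
        = (N y).choose (D y - 1) * ∏ x ∈ s.erase y, (N x).choose (D x) := by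
      rw [← Finset.mul_prod_erase s _ hys, hDe y, if_pos rfl]
      congr 1
      refine Finset.prod_congr rfl fun x hx => ?_
      rw [hDe x, if_neg (Finset.ne_of_mem_erase hx)]
    rw [hch2, step3, ← add_mul]
    have hfac : (N y + 1).choose (D y) = (N y).choose (D y) + (N y).choose (D y - 1) := by
      obtain ⟨k, hk⟩ : ∃ k, D y = k + 1 := ⟨D y - 1, by omega⟩
      rw [hk]
      simp only [Nat.add_sub_cancel]
      rw [Nat.choose_succ_succ']
      omega
    rw [hfac]

lemma encF_insert {a : LTy} {E : Finset LTy} (ha : a ∉ E) :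
    encF (insert a E) = encF E + Finsupp.single a.1 1 := by
  rw [encF, encF, Finset.sum_insert ha, add_comm]

/-- subset counting lemma: the number of subsets with a given encoding -/
lemma count_encF (T : Finset LTy) (D : EncT) :
    (T.powerset.filter (fun E => encF E = D)).card = ch (encF T) D := by
  classical
  induction T using Finset.induction generalizing D with
  | empty =>
    rw [encF_empty, ch_zero_left]
    simp only [Finset.powerset_empty, Finset.filter_singleton, encF_empty]
    split
    · rename_i h; rw [if_pos h.symm]; simp
    · rename_i h; rw [if_neg (fun h' => h h'.symm)]; simp
  | @insert a T ha ih =>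
    classical
    rw [encF_insert ha, ch_succ, Finset.powerset_insert, Finset.filter_union]
    set e : EncT := Finsupp.single a.1 1 with he
    have hdis : Disjoint (T.powerset.filter (fun E => encF E = D))
        ((T.powerset.image (insert a)).filter (fun E => encF E = D)) := by
      rw [Finset.disjoint_left]
      intro E hE hE'
      rw [Finset.mem_filter, Finset.mem_powerset] at hE
      rw [Finset.mem_filter, Finset.mem_image] at hE'
      obtain ⟨⟨F, hF, rfl⟩, -⟩ := hE'
      exact ha (hE.1 (Finset.mem_insert_self a F))
    rw [Finset.card_union_of_disjoint hdis, ih D]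
    congr 1
    rw [Finset.filter_image]
    have hinj : Set.InjOn (insert a) ((T.powerset.filter
        (fun F => encF (insert a F) = D) : Finset (Finset LTy)) : Set (Finset LTy)) := by
      intro F hF G hG hFG
      simp only [Finset.coe_filter, Set.mem_setOf_eq, Finset.mem_powerset] at hF hG
      have haF : a ∉ F := fun h => ha (hF.1 h)
      have haG : a ∉ G := fun h => ha (hG.1 h)
      ext t
      constructor
      · intro ht
        have : t ∈ insert a G := hFG ▸ Finset.mem_insert_of_mem ht
        rcases Finset.mem_insert.mp this with rfl | h'
        · exact absurd ht haF
        · exact h'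
      · intro ht
        have : t ∈ insert a F := hFG.symm ▸ Finset.mem_insert_of_mem ht
        rcases Finset.mem_insert.mp this with rfl | h'
        · exact absurd ht haG
        · exact h'
    rw [Finset.card_image_of_injOn hinj]
    by_cases hcase : e ≤ D
    · have hset : T.powerset.filter (fun F => encF (insert a F) = D)
          = T.powerset.filter (fun F => encF F = D - e) := by
        ext F
        simp only [Finset.mem_filter, Finset.mem_powerset]
        constructor
        · rintro ⟨hF, h2⟩
          refine ⟨hF, ?_⟩
          rw [encF_insert (fun h => ha (hF h))] at h2
          exact eq_tsub_of_add_eq h2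
        · rintro ⟨hF, h2⟩
          refine ⟨hF, ?_⟩
          rw [encF_insert (fun h => ha (hF h)), h2]
          exact tsub_add_cancel_of_le hcase
      rw [hset, ih (D - e), if_pos hcase]
    · have hset : T.powerset.filter (fun F => encF (insert a F) = D) = ∅ := by
        rw [Finset.filter_eq_empty_iff]
        intro F hF h2
        rw [Finset.mem_powerset] at hF
        rw [encF_insert (fun h => ha (hF h))] at h2
        exact hcase (h2 ▸ le_add_self)
      rw [hset, if_neg hcase]
      simp

end Aux2
section Aux3

/-- ordered partitions (with possibly empty blocks) of `T` into `p` blocks -/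
noncomputable def OP (p : ℕ) (T : Finset LTy) : Finset (Fin p → Finset LTy) :=
  (Fintype.piFinset fun _ => T.powerset).filter fun E =>
    (Finset.univ.biUnion E = T) ∧ ∀ j k, j ≠ k → Disjoint (E j) (E k)

/-- tuples of encodings summing to `N` -/
noncomputable def Tup (p : ℕ) (N : EncT) : Finset (Fin p → EncT) :=
  (Fintype.piFinset fun _ => Finset.Iic N).filter fun t => ∑ k, t k = N

lemma mem_OP {p : ℕ} {T : Finset LTy} {E : Fin p → Finset LTy} :
    E ∈ OP p T ↔ (∀ k, E k ⊆ T) ∧ Finset.univ.biUnion E = T ∧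
      ∀ j k, j ≠ k → Disjoint (E j) (E k) := by
  unfold OP
  rw [Finset.mem_filter, Fintype.mem_piFinset]
  simp only [Finset.mem_powerset, and_assoc]

lemma mem_Tup {p : ℕ} {N : EncT} {t : Fin p → EncT} :
    t ∈ Tup p N ↔ (∀ k, t k ≤ N) ∧ ∑ k, t k = N := by
  unfold Tup
  rw [Finset.mem_filter, Fintype.mem_piFinset]
  simp only [Finset.mem_Iic]

lemma αn_zero : αn (0 : EncT) = 1 := by simp [αn]

lemma sum_encF_OP {p : ℕ} {T : Finset LTy} {E : Fin p → Finset LTy} (hE : E ∈ OP p T) :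
    ∑ k, encF (E k) = encF T := by
  rw [mem_OP] at hE
  conv_rhs => rw [← hE.2.1]
  rw [encF, Finset.sum_biUnion]
  · rfl
  · intro j _ k _ hjk
    exact hE.2.2 j k hjk

/-- the weight in the multinomial expansion -/
noncomputable def wt (N : EncT) {p : ℕ} (t : Fin p → EncT) : ℚ :=
  (αn N : ℚ) / ∏ k, (αn (t k) : ℚ)

lemma prod_αn_ne_zero {p : ℕ} (t : Fin p → EncT) : (∏ k, (αn (t k) : ℚ)) ≠ 0 :=
  Finset.prod_ne_zero_iff.mpr fun k _ => by exact_mod_cast (αn_pos (t k)).ne'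

lemma mem_OP_tail {p : ℕ} {T : Finset LTy} {E : Fin (p+1) → Finset LTy}
    (hE : E ∈ OP (p+1) T) :
    E 0 ⊆ T ∧ (fun k => E k.succ) ∈ OP p (T \ E 0) := by
  rw [mem_OP] at hE
  obtain ⟨h1, h2, h3⟩ := hE
  refine ⟨h1 0, ?_⟩
  rw [mem_OP]
  refine ⟨fun k => ?_, ?_, fun j k hjk => h3 j.succ k.succ
    (fun h => hjk (Fin.succ_injective _ h))⟩
  · rw [Finset.subset_sdiff]
    exact ⟨h1 k.succ, h3 k.succ 0 (Fin.succ_ne_zero k)⟩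
  · ext t
    simp only [Finset.mem_biUnion, Finset.mem_univ, true_and, Finset.mem_sdiff]
    constructor
    · rintro ⟨k, hk⟩
      exact ⟨h1 k.succ hk,
        Finset.disjoint_left.mp (h3 k.succ 0 (Fin.succ_ne_zero k)) hk⟩
    · rintro ⟨ht, h0⟩
      rw [← h2] at ht
      obtain ⟨k', -, hk'⟩ := Finset.mem_biUnion.mp ht
      rcases Fin.eq_zero_or_eq_succ k' with rfl | ⟨k'', rfl⟩
      · exact absurd hk' h0
      · exact ⟨k'', hk'⟩

lemma cons_mem_OP {p : ℕ} {T E0 : Finset LTy} {F : Fin p → Finset LTy}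
    (hE0 : E0 ⊆ T) (hF : F ∈ OP p (T \ E0)) :
    Fin.cons E0 F ∈ OP (p+1) T := by
  rw [mem_OP] at hF ⊢
  obtain ⟨h1, h2, h3⟩ := hF
  refine ⟨fun k => ?_, ?_, fun j k hjk => ?_⟩
  · refine Fin.cases ?_ (fun k' => ?_) k
    · rw [Fin.cons_zero]; exact hE0
    · rw [Fin.cons_succ]
      exact (h1 k').trans Finset.sdiff_subset
  · ext t
    simp only [Finset.mem_biUnion, Finset.mem_univ, true_and]
    rw [Fin.exists_fin_succ]
    simp only [Fin.cons_zero, Fin.cons_succ]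
    constructor
    · rintro (h | ⟨k, hk⟩)
      · exact hE0 h
      · exact (Finset.mem_sdiff.mp (h1 k hk)).1
    · intro ht
      by_cases h0' : t ∈ E0
      · exact Or.inl h0'
      · have hts : t ∈ T \ E0 := Finset.mem_sdiff.mpr ⟨ht, h0'⟩
        rw [← h2] at hts
        obtain ⟨k, -, hk⟩ := Finset.mem_biUnion.mp hts
        exact Or.inr ⟨k, hk⟩
  · revert hjk
    refine Fin.cases ?_ (fun j' => ?_) j <;>
      refine Fin.cases ?_ (fun k' => ?_) k <;> intro hjk
    · exact absurd rfl hjk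
    · rw [Fin.cons_zero, Fin.cons_succ]
      exact Finset.disjoint_sdiff.mono_right (h1 k')
    · rw [Fin.cons_zero, Fin.cons_succ]
      exact Finset.sdiff_disjoint.mono_left (h1 j')
    · rw [Fin.cons_succ, Fin.cons_succ]
      exact h3 j' k' (fun h => hjk (by rw [h]))

lemma mem_Tup_tail {p : ℕ} {N : EncT} {t : Fin (p+1) → EncT} (ht : t ∈ Tup (p+1) N) :
    t 0 ≤ N ∧ (fun k => t k.succ) ∈ Tup p (N - t 0) := by
  rw [mem_Tup] at ht
  obtain ⟨h1, h2⟩ := ht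
  have hsum : ∑ k : Fin p, t k.succ = N - t 0 := by
    rw [Fin.sum_univ_succ] at h2
    exact eq_tsub_of_add_eq (by rw [add_comm]; exact h2)
  refine ⟨h1 0, ?_⟩
  rw [mem_Tup]
  refine ⟨fun k => ?_, hsum⟩
  rw [← hsum]
  exact Finset.single_le_sum (f := fun k : Fin p => t k.succ)
    (fun k _ => zero_le) (Finset.mem_univ k)

lemma cons_mem_Tup {p : ℕ} {N D0 : EncT} {t' : Fin p → EncT}
    (hD0 : D0 ≤ N) (ht' : t' ∈ Tup p (N - D0)) :
    Fin.cons D0 t' ∈ Tup (p+1) N := by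
  rw [mem_Tup] at ht' ⊢
  obtain ⟨h1, h2⟩ := ht'
  constructor
  · intro k
    refine Fin.cases ?_ (fun k' => ?_) k
    · rw [Fin.cons_zero]; exact hD0
    · rw [Fin.cons_succ]
      exact (h1 k').trans tsub_le_self
  · rw [Fin.sum_univ_succ]
    simp only [Fin.cons_zero, Fin.cons_succ]
    rw [h2]
    exact add_tsub_cancel_of_le hD0

/-- The key multinomial expansion lemma. -/
lemma M2 (H : EncT → ℚ) (p : ℕ) : ∀ (T : Finset LTy),
    ∑ E ∈ OP p T, ∏ k, H (encF (E k))
      = ∑ t ∈ Tup p (encF T), wt (encF T) t * ∏ k, H (t k) := by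
  induction p with
  | zero =>
    intro T
    by_cases hT : T = ∅
    · subst hT
      rw [encF_empty]
      have hOP : OP 0 (∅ : Finset LTy) = Finset.univ := by
        ext E
        simp only [mem_OP, Finset.mem_univ, iff_true]
        refine ⟨fun k => k.elim0, ?_, fun j k h => j.elim0⟩
        ext t; simp
      have hTup : Tup 0 (0 : EncT) = Finset.univ := by
        ext t
        simp only [mem_Tup, Finset.mem_univ, iff_true]
        exact ⟨fun k => k.elim0, by simp⟩
      rw [hOP, hTup, Fintype.sum_unique, Fintype.sum_unique]
      simp [wt, αn_zero]
    · have hN0 : encF T ≠ 0 := fun h => hT (encF_eq_zero_iff.mp h)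
      have hOP : OP 0 T = ∅ := by
        rw [Finset.eq_empty_iff_forall_notMem]
        intro E hE
        rw [mem_OP] at hE
        apply hT
        rw [← hE.2.1]
        ext t; simp
      have hTup : Tup 0 (encF T) = ∅ := by
        rw [Finset.eq_empty_iff_forall_notMem]
        intro t ht
        rw [mem_Tup] at ht
        exact hN0 (by rw [← ht.2]; simp)
      rw [hOP, hTup, Finset.sum_empty, Finset.sum_empty]
  | succ p ih =>
    intro T
    classical
    have step1 : ∑ E ∈ OP (p + 1) T, ∏ k, H (encF (E k))
        = ∑ E0 ∈ T.powerset, ∑ F ∈ OP p (T \ E0),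
            H (encF E0) * ∏ k, H (encF (F k)) := by
      rw [Finset.sum_sigma']
      refine Finset.sum_bij'
        (fun (E : Fin (p+1) → Finset LTy) (_ : E ∈ OP (p+1) T) =>
          (⟨E 0, fun k => E k.succ⟩ : Σ _ : Finset LTy, (Fin p → Finset LTy)))
        (fun q _ => Fin.cons q.1 q.2) ?_ ?_ ?_ ?_ ?_
      · intro E hE
        rw [Finset.mem_sigma, Finset.mem_powerset]
        exact mem_OP_tail hE
      · intro q hq
        rw [Finset.mem_sigma, Finset.mem_powerset] at hq
        exact cons_mem_OP hq.1 hq.2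
      · intro E hE
        exact Fin.cons_self_tail E
      · intro q hq
        rcases q with ⟨E0, F⟩
        simp only [Fin.cons_zero, Fin.cons_succ]
      · intro E hE
        rw [Fin.prod_univ_succ]
    rw [step1]
    have step2 : ∑ E0 ∈ T.powerset, ∑ F ∈ OP p (T \ E0),
            H (encF E0) * ∏ k, H (encF (F k))
        = ∑ E0 ∈ T.powerset,
            (H (encF E0) * ∑ t' ∈ Tup p (encF T - encF E0),
              wt (encF T - encF E0) t' * ∏ k, H (t' k)) := by
      refine Finset.sum_congr rfl fun E0 hE0 => ?_
      rw [← Finset.mul_sum, ih (T \ E0), encF_sdiff (Finset.mem_powerset.mp hE0)]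
    rw [step2]
    have step3 : ∑ E0 ∈ T.powerset,
          (H (encF E0) * ∑ t' ∈ Tup p (encF T - encF E0),
            wt (encF T - encF E0) t' * ∏ k, H (t' k))
        = ∑ D0 ∈ Finset.Iic (encF T), (ch (encF T) D0 : ℚ) *
            (H D0 * ∑ t' ∈ Tup p (encF T - D0),
              wt (encF T - D0) t' * ∏ k, H (t' k)) := by
      rw [← Finset.sum_fiberwise_of_maps_to (g := encF)
        (fun E0 hE0 => Finset.mem_Iic.mpr (encF_mono (Finset.mem_powerset.mp hE0)))
        (fun E0 => H (encF E0) * ∑ t' ∈ Tup p (encF T - encF E0),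
          wt (encF T - encF E0) t' * ∏ k, H (t' k))]
      refine Finset.sum_congr rfl fun D0 _ => ?_
      have hconst : ∀ E0 ∈ T.powerset.filter (fun E0 => encF E0 = D0),
          (H (encF E0) * ∑ t' ∈ Tup p (encF T - encF E0),
            wt (encF T - encF E0) t' * ∏ k, H (t' k))
          = (H D0 * ∑ t' ∈ Tup p (encF T - D0),
              wt (encF T - D0) t' * ∏ k, H (t' k)) := by
        intro E0 hE0
        rw [(Finset.mem_filter.mp hE0).2]
      rw [Finset.sum_congr rfl hconst, Finset.sum_const, count_encF, nsmul_eq_mul]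
    rw [step3]
    have step4 : ∑ t ∈ Tup (p+1) (encF T), wt (encF T) t * ∏ k, H (t k)
        = ∑ D0 ∈ Finset.Iic (encF T), ∑ t' ∈ Tup p (encF T - D0),
            (ch (encF T) D0 : ℚ) *
              (H D0 * (wt (encF T - D0) t' * ∏ k, H (t' k))) := by
      rw [Finset.sum_sigma']
      refine Finset.sum_bij'
        (fun (t : Fin (p+1) → EncT) (_ : t ∈ Tup (p+1) (encF T)) =>
          (⟨t 0, fun k => t k.succ⟩ : Σ _ : EncT, (Fin p → EncT)))
        (fun q _ => Fin.cons q.1 q.2) ?_ ?_ ?_ ?_ ?_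
      · intro t ht
        rw [Finset.mem_sigma, Finset.mem_Iic]
        exact mem_Tup_tail ht
      · intro q hq
        rw [Finset.mem_sigma, Finset.mem_Iic] at hq
        exact cons_mem_Tup hq.1 hq.2
      · intro t ht
        exact Fin.cons_self_tail t
      · intro q hq
        rcases q with ⟨D0, t'⟩
        simp only [Fin.cons_zero, Fin.cons_succ]
      · intro t ht
        obtain ⟨h0, htail⟩ := mem_Tup_tail ht
        have hch : (ch (encF T) (t 0) : ℚ) *
            ((αn (t 0) : ℚ) * (αn (encF T - t 0) : ℚ)) = (αn (encF T) : ℚ) := by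
          exact_mod_cast congrArg (Nat.cast (R := ℚ)) (ch_mul h0)
        have h1 : (αn (t 0) : ℚ) ≠ 0 := by exact_mod_cast (αn_pos (t 0)).ne'
        have h2 : (∏ k : Fin p, (αn (t k.succ) : ℚ)) ≠ 0 :=
          prod_αn_ne_zero (fun k => t k.succ)
        rw [wt, wt, Fin.prod_univ_succ, Fin.prod_univ_succ, ← hch]
        field_simp
    rw [step4]
    refine Finset.sum_congr rfl fun D0 _ => ?_
    simp only [Finset.mul_sum]

end Aux3
section Aux4

lemma IsPartitionOf.pairwiseDisjoint {T : Finset LTy} {P : Finset (Finset LTy)}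
    (h : IsPartitionOf T P) :
    ∀ B ∈ P, ∀ B' ∈ P, B ≠ B' → Disjoint B B' := by
  intro B hB B' hB' hne
  rw [Finset.disjoint_left]
  intro x hx hx'
  have hxT : x ∈ T := (h.1 B hB).2 hx
  obtain ⟨E, -, huniq⟩ := h.2 x hxT
  exact hne ((huniq B ⟨hB, hx⟩).trans (huniq B' ⟨hB', hx'⟩).symm)

lemma IsPartitionOf.biUnion_eq {T : Finset LTy} {P : Finset (Finset LTy)}
    (h : IsPartitionOf T P) : P.biUnion id = T := by
  ext x
  simp only [Finset.mem_biUnion, id]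
  constructor
  · rintro ⟨B, hB, hx⟩
    exact (h.1 B hB).2 hx
  · intro hx
    obtain ⟨E, ⟨hE, hxE⟩, -⟩ := h.2 x hx
    exact ⟨E, hE, hxE⟩

/-- the finset of partitions of `T` -/
noncomputable def Parts (T : Finset LTy) : Finset (Finset (Finset LTy)) :=
  T.powerset.powerset.filter (IsPartitionOf T)

lemma mem_Parts {T : Finset LTy} {P : Finset (Finset LTy)} :
    P ∈ Parts T ↔ IsPartitionOf T P := by
  unfold Parts
  rw [Finset.mem_filter, Finset.mem_powerset]
  constructor
  · exact fun h => h.2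
  · intro h
    refine ⟨?_, h⟩
    intro B hB
    rw [Finset.mem_powerset]
    exact (h.1 B hB).2

lemma image_mem_Parts {p : ℕ} {T : Finset LTy} {E : Fin p → Finset LTy}
    (hE : E ∈ OP p T) (hne : ∀ k, E k ≠ ∅) :
    IsPartitionOf T (Finset.univ.image E) := by
  rw [mem_OP] at hE
  obtain ⟨h1, h2, h3⟩ := hE
  constructor
  · intro B hB
    obtain ⟨k, -, rfl⟩ := Finset.mem_image.mp hB
    exact ⟨Finset.nonempty_iff_ne_empty.mpr (hne k), h1 k⟩
  · intro x hx
    rw [← h2] at hx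
    obtain ⟨k, -, hk⟩ := Finset.mem_biUnion.mp hx
    refine ⟨E k, ⟨Finset.mem_image.mpr ⟨k, Finset.mem_univ k, rfl⟩, hk⟩, ?_⟩
    rintro B ⟨hB, hxB⟩
    obtain ⟨j, -, rfl⟩ := Finset.mem_image.mp hB
    by_contra hne'
    have hjk : j ≠ k := fun h => hne' (by rw [h])
    exact Finset.disjoint_left.mp (h3 j k hjk) hxB hk

lemma OP_inj {p : ℕ} {T : Finset LTy} {E : Fin p → Finset LTy}
    (hE : E ∈ OP p T) (hne : ∀ k, E k ≠ ∅) : Function.Injective E := by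
  rw [mem_OP] at hE
  intro j k hjk
  by_contra hne'
  have := hE.2.2 j k hne'
  rw [hjk] at this
  exact hne k (by simpa using disjoint_self.mp this)

/-- fiber count: orderings of a partition -/
lemma card_fiber_eq {p : ℕ} {T : Finset LTy} {P : Finset (Finset LTy)}
    (hP : IsPartitionOf T P) (hPc : P.card = p) :
    (((OP p T).filter (fun E => (∀ k, E k ≠ ∅) ∧ Finset.univ.image E = P)).card)
      = (Nat.factorial p) := by
  classical
  have hcard2 : Fintype.card (Fin p ↪ {B // B ∈ P}) = (Nat.factorial p) := by
    rw [Fintype.card_embedding_eq]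
    simp only [Fintype.card_fin, Fintype.card_coe, hPc]
    exact Nat.descFactorial_self p
  rw [← hcard2, ← Finset.card_univ]
  refine Finset.card_bij
    (fun E hE => ?_) ?_ ?_ ?_
  · -- construct the embedding
    refine ⟨fun k => ⟨E k, ?_⟩, ?_⟩
    · rw [Finset.mem_filter] at hE
      rw [← hE.2.2]
      exact Finset.mem_image.mpr ⟨k, Finset.mem_univ k, rfl⟩
    · intro j k hjk
      rw [Finset.mem_filter] at hE
      exact OP_inj hE.1 hE.2.1 (congrArg Subtype.val hjk)
  · intro E hE
    exact Finset.mem_univ _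
  · intro E hE E' hE' heq
    funext k
    have := congrFun (congrArg (fun (f : Fin p ↪ {B // B ∈ P}) => (f : Fin p → {B // B ∈ P})) heq) k
    exact congrArg Subtype.val this
  · intro f _
    refine ⟨fun k => (f k : Finset LTy), ?_, ?_⟩
    · -- membership in the fiber
      have hinj : Function.Injective (fun k => (f k : Finset LTy)) := by
        intro j k h
        exact f.injective (Subtype.ext h)
      have himage : Finset.univ.image (fun k => (f k : Finset LTy)) = P := by
        apply Finset.eq_of_subset_of_card_le
        · intro B hB
          obtain ⟨k, -, rfl⟩ := Finset.mem_image.mp hB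
          exact (f k).2
        · rw [Finset.card_image_of_injective _ hinj, Finset.card_univ,
            Fintype.card_fin, hPc]
      rw [Finset.mem_filter]
      refine ⟨?_, fun k => ?_, himage⟩
      · rw [mem_OP]
        refine ⟨fun k => (hP.1 _ (f k).2).2, ?_, fun j k hjk => ?_⟩
        · rw [← hP.biUnion_eq]
          ext x
          simp only [Finset.mem_biUnion, Finset.mem_univ, true_and, id]
          constructor
          · rintro ⟨k, hk⟩
            exact ⟨(f k : Finset LTy), (f k).2, hk⟩
          · rintro ⟨B, hB, hxB⟩
            have : B ∈ Finset.univ.image (fun k => (f k : Finset LTy)) := by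
              rw [himage]; exact hB
            obtain ⟨k, -, rfl⟩ := Finset.mem_image.mp this
            exact ⟨k, hxB⟩
        · refine hP.pairwiseDisjoint _ (f j).2 _ (f k).2 ?_
          exact fun h => hjk (f.injective (Subtype.ext h))
      · exact Finset.nonempty_iff_ne_empty.mp (hP.1 _ (f k).2).1
    · -- i (j f) = f
      apply DFunLike.ext
      intro k
      rfl

/-- ordered-to-unordered: summing over ordered partitions vs partitions -/
lemma sum_OP_eq_parts (H : EncT → ℚ) (hH : H 0 = 0) (p : ℕ) (T : Finset LTy) :
    ∑ E ∈ OP p T, ∏ k, H (encF (E k))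
      = ((Nat.factorial p) : ℚ) * ∑ P ∈ (Parts T).filter (fun P => P.card = p),
          ∏ B ∈ P, H (encF B) := by
  classical
  have hrestrict : ∑ E ∈ OP p T, ∏ k, H (encF (E k))
      = ∑ E ∈ (OP p T).filter (fun E => ∀ k, E k ≠ ∅), ∏ k, H (encF (E k)) := by
    rw [Finset.sum_filter_of_ne]
    intro E _ hne
    by_contra h
    push_neg at h
    obtain ⟨k, hk⟩ := h
    refine hne (Finset.prod_eq_zero (Finset.mem_univ k) ?_)
    rw [hk, encF_empty, hH]
  rw [hrestrict]
  have hmap : ∀ E ∈ (OP p T).filter (fun E => ∀ k, E k ≠ ∅),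
      Finset.univ.image E ∈ (Parts T).filter (fun P => P.card = p) := by
    intro E hE
    rw [Finset.mem_filter] at hE
    rw [Finset.mem_filter, mem_Parts]
    refine ⟨image_mem_Parts hE.1 hE.2, ?_⟩
    rw [Finset.card_image_of_injective _ (OP_inj hE.1 hE.2), Finset.card_univ,
      Fintype.card_fin]
  rw [← Finset.sum_fiberwise_of_maps_to hmap (fun E => ∏ k, H (encF (E k)))]
  rw [Finset.mul_sum]
  refine Finset.sum_congr rfl fun P hP => ?_
  rw [Finset.mem_filter, mem_Parts] at hP
  have hfib : ((OP p T).filter (fun E => ∀ k, E k ≠ ∅)).filter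
      (fun E => Finset.univ.image E = P)
      = (OP p T).filter (fun E => (∀ k, E k ≠ ∅) ∧ Finset.univ.image E = P) := by
    rw [Finset.filter_filter]
    congr!
  have hconst : ∀ E ∈ (OP p T).filter
      (fun E => (∀ k, E k ≠ ∅) ∧ Finset.univ.image E = P),
      ∏ k, H (encF (E k)) = ∏ B ∈ P, H (encF B) := by
    intro E hE
    rw [Finset.mem_filter] at hE
    rw [← hE.2.2]
    exact (Finset.prod_image (g := E) (f := fun B => H (encF B)) (fun j _ k _ h => OP_inj hE.1 hE.2.1 h)).symm
  rw [hfib, Finset.sum_congr rfl hconst, Finset.sum_const,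
    card_fiber_eq hP.1 hP.2, nsmul_eq_mul]

end Aux4
section Aux5

lemma mem_TofD {D : EncT} {t : LTy} : t ∈ TofD D ↔ t.1 ∈ D.support ∧ t.2 < D t.1 := by
  unfold TofD
  rw [Finset.mem_biUnion]
  constructor
  · rintro ⟨x, hx, ht⟩
    obtain ⟨n, hn, rfl⟩ := Finset.mem_image.mp ht
    exact ⟨hx, Finset.mem_range.mp hn⟩
  · rintro ⟨h1, h2⟩
    exact ⟨t.1, h1, Finset.mem_image.mpr ⟨t.2, Finset.mem_range.mpr h2, rfl⟩⟩

lemma encF_TofD (D : EncT) : encF (TofD D) = D := by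
  ext x
  rw [encF_apply]
  have hset : (TofD D).filter (fun t => t.1 = x)
      = (Finset.range (D x)).image (fun n => (x, n)) := by
    ext t
    rw [Finset.mem_filter, mem_TofD, Finset.mem_image]
    constructor
    · rintro ⟨⟨h1, h2⟩, h3⟩
      refine ⟨t.2, ?_, ?_⟩
      · rw [← h3]; exact Finset.mem_range.mpr h2
      · rw [← h3]
    · rintro ⟨n, hn, rfl⟩
      have hpos : 0 < D x := lt_of_le_of_lt (Nat.zero_le n) (Finset.mem_range.mp hn)
      exact ⟨⟨Finsupp.mem_support_iff.mpr hpos.ne', Finset.mem_range.mp hn⟩, rfl⟩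
  rw [hset, Finset.card_image_of_injective _
    (fun a b h => by simpa using congrArg Prod.snd h), Finset.card_range]

lemma TofD_nonempty {D : EncT} (h : D ≠ 0) : (TofD D).Nonempty := by
  rw [Finset.nonempty_iff_ne_empty]
  intro hc
  exact h (by rw [← encF_TofD D, hc, encF_empty])

lemma card_TofD_le_cogD {D : EncT} (hD : IsEncoding D) : (TofD D).card ≤ cogD D := by
  rw [encF_card (TofD D), encF_TofD]
  calc ∑ x ∈ D.support, D x
      ≤ ∑ x ∈ D.support, D x * cx x :=
        Finset.sum_le_sum fun x hx => Nat.le_mul_of_pos_right _ (one_le_cx (hD x hx))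
    _ = cogD D := rfl

/-- box of allowed edge types -/
def BoxF (d : ℕ) : Finset XQ :=
  (Finset.range (d+1)) ×ˢ (Finset.range (d+2)) ×ˢ (Finset.range (d+1)) ×ˢ
    (Finset.range (d+1))

lemma mem_BoxF {d : ℕ} {x : XQ} :
    x ∈ BoxF d ↔ x.1 < d + 1 ∧ x.2.1 < d + 2 ∧ x.2.2.1 < d + 1 ∧ x.2.2.2 < d + 1 := by
  unfold BoxF
  rcases x with ⟨a, b, w, i⟩
  simp [Finset.mem_product]

/-- dominating finsupp -/
noncomputable def Dmax (d δ : ℕ) : EncT :=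
  Finsupp.indicator (BoxF d) (fun _ _ => d + δ)

lemma le_Dmax {d δ : ℕ} {D : EncT}
    (h : ∀ x ∈ D.support, x ∈ BoxF d ∧ D x ≤ d + δ) : D ≤ Dmax d δ := by
  rw [Finsupp.le_def]
  intro x
  by_cases hx : x ∈ D.support
  · rw [Dmax, Finsupp.indicator_apply, dif_pos (h x hx).1]
    exact (h x hx).2
  · rw [Finsupp.notMem_support_iff.mp hx]
    exact Nat.zero_le _

/-- structural bound for allowable encodings -/
lemma allow_le_Dmax (d δ : ℕ) {D : EncT} (hE : IsEncoding D) (hA : AllowD d D) :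
    D ≤ Dmax d δ := by
  refine le_Dmax fun x hx => ?_
  obtain ⟨hv1, hv2, hv3, hv4⟩ := hE x hx
  have hb : x.2.1 ≤ d + 1 := hA.1 x hx
  have hwD : x.2.2.1 * D x ≤ wjD D x.2.2.2 := by
    rw [wjD]
    refine Finset.single_le_sum (f := fun y => y.2.2.1 * D y) (fun y _ => Nat.zero_le _) ?_
    rw [Finset.mem_filter]
    exact ⟨hx, hv1, hv2⟩
  have hwj : wjD D x.2.2.2 ≤ x.2.2.2 := hA.2.2 x.2.2.2
  have hDpos : 1 ≤ D x := Nat.one_le_iff_ne_zero.mpr (Finsupp.mem_support_iff.mp hx)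
  have hi : x.2.2.2 ≤ d := by omega
  have hkey : x.2.2.1 * D x ≤ d := le_trans hwD (le_trans hwj hi)
  constructor
  · rw [mem_BoxF]
    refine ⟨by omega, by omega, ?_, by omega⟩
    have : x.2.2.1 ≤ x.2.2.1 * D x := Nat.le_mul_of_pos_right _ hDpos
    omega
  · have : D x ≤ x.2.2.1 * D x := Nat.le_mul_of_pos_left _ hv3
    omega

lemma Nd_support_le (d δ : ℕ) {D : EncT} (hE : IsEncoding D) (hNd : Nd d D ≠ 0) :
    D ≤ Dmax d δ := by
  rw [Nd] at hNd
  by_cases hA : AllowD d D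
  · exact allow_le_Dmax d δ hE hA
  · rw [if_neg hA] at hNd
    exact absurd rfl hNd

/-- structural bound for encodings with nonvanishing `QstarD` -/
lemma QstarD_support_le (d δ : ℕ) {D : EncT} (hE : IsEncoding D) (hcog : cogD D = δ)
    (hQ : QstarD d D ≠ 0) : D ≤ Dmax d δ := by
  have hex : ∃ P, IsPartitionOf (TofD D) P ∧ ∏ E ∈ P, NstarE d E ≠ 0 := by
    by_contra hno
    push_neg at hno
    apply hQ
    rw [QstarD]
    refine finsum_eq_zero_of_forall_eq_zero fun P => ?_
    rw [finsum_eq_if]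
    split
    · rename_i hPp
      rw [hno P hPp, mul_zero]
    · rfl
  obtain ⟨P, hP, hprod⟩ := hex
  have hallow : ∀ E ∈ P, AllowE d E := by
    intro E hEP
    have := Finset.prod_ne_zero_iff.mp hprod E hEP
    rw [NstarE] at this
    by_contra hA
    rw [if_neg hA] at this
    exact this rfl
  refine le_Dmax fun x hx => ?_
  obtain ⟨hv1, hv2, hv3, hv4⟩ := hE x hx
  have hDpos : 1 ≤ D x := Nat.one_le_iff_ne_zero.mpr (Finsupp.mem_support_iff.mp hx)
  have htm : ((x, 0) : LTy) ∈ TofD D := mem_TofD.mpr ⟨hx, hDpos⟩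
  obtain ⟨E, ⟨hEP, htE⟩, -⟩ := hP.2 _ htm
  obtain ⟨ha1, ha2, ha3⟩ := hallow E hEP
  have hb : x.2.1 ≤ d + 1 := ha1 (x, 0) htE
  have hw : x.2.2.1 ≤ wjE E x.2.2.2 := by
    rw [wjE]
    have hmem : ((x, 0) : LTy) ∈ E.filter (fun t => t.1.1 ≤ x.2.2.2 ∧ x.2.2.2 < t.1.2.1) := by
      rw [Finset.mem_filter]
      exact ⟨htE, hv1, hv2⟩
    exact Finset.single_le_sum (f := fun t : LTy => t.1.2.2.1)
      (fun y _ => Nat.zero_le _) hmem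
  have hwj : wjE E x.2.2.2 ≤ x.2.2.2 := ha3 x.2.2.2
  have hi : x.2.2.2 ≤ d := by omega
  constructor
  · rw [mem_BoxF]
    exact ⟨by omega, by omega, by omega, by omega⟩
  · have := le_cogD D hE x
    omega

/-- the finite set of relevant encodings with given cogenus -/
noncomputable def DE (d δ δ' : ℕ) : Finset EncT :=
  (Finset.Iic (Dmax d δ)).filter (fun D => IsEncoding D ∧ cogD D = δ')

lemma mem_DE {d δ δ' : ℕ} {D : EncT} :
    D ∈ DE d δ δ' ↔ D ≤ Dmax d δ ∧ IsEncoding D ∧ cogD D = δ' := by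
  unfold DE
  rw [Finset.mem_filter, Finset.mem_Iic]

lemma NSev_eq_sum (d δ δ' : ℕ) (h1 : 1 ≤ δ') :
    NSev d δ' = ∑ D ∈ DE d δ δ', Nd d D := by
  rw [NSev, if_neg (by omega)]
  have hiff : (∑ᶠ (D : EncT) (_ : IsEncoding D ∧ cogD D = δ'), Nd d D)
      = ∑ᶠ D ∈ {D : EncT | IsEncoding D ∧ cogD D = δ'}, Nd d D := rfl
  rw [hiff]
  refine finsum_mem_eq_sum_of_inter_support_eq _ ?_
  ext D
  simp only [Set.mem_inter_iff, Set.mem_setOf_eq, Function.mem_support,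
    Finset.coe_filter, Finset.mem_coe, mem_DE]
  constructor
  · rintro ⟨⟨h2, h3⟩, h4⟩
    exact ⟨⟨Nd_support_le d δ h2 h4, h2, h3⟩, h4⟩
  · rintro ⟨⟨h2, h3, h4⟩, h5⟩
    exact ⟨⟨h3, h4⟩, h5⟩

lemma Qd_eq_sum (d δ : ℕ) :
    (∑ᶠ (D : EncT) (_ : IsEncoding D ∧ cogD D = δ), Qd d D)
      = ∑ D ∈ DE d δ δ, Qd d D := by
  have hiff : (∑ᶠ (D : EncT) (_ : IsEncoding D ∧ cogD D = δ), Qd d D)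
      = ∑ᶠ D ∈ {D : EncT | IsEncoding D ∧ cogD D = δ}, Qd d D := rfl
  rw [hiff]
  refine finsum_mem_eq_sum_of_inter_support_eq _ ?_
  ext D
  simp only [Set.mem_inter_iff, Set.mem_setOf_eq, Function.mem_support,
    Finset.coe_filter, Finset.mem_coe, mem_DE]
  constructor
  · rintro ⟨⟨h2, h3⟩, h4⟩
    have hQ : QstarD d D ≠ 0 := by
      intro hc
      apply h4
      rw [Qd, hc]
      simp
    exact ⟨⟨QstarD_support_le d δ h2 h3 hQ, h2, h3⟩, h4⟩
  · rintro ⟨⟨h2, h3, h4⟩, h5⟩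
    exact ⟨⟨h3, h4⟩, h5⟩

/-- `H` function: `N_*` of the encoding, vanishing at `0`. -/
noncomputable def Hfun (d : ℕ) (D : EncT) : ℚ := if D = 0 then 0 else (NZ d D : ℚ)

lemma Hfun_zero (d : ℕ) : Hfun d 0 = 0 := if_pos rfl

lemma QstarD_cast (d : ℕ) (D : EncT) :
    (QstarD d D : ℚ) = ∑ P ∈ Parts (TofD D),
      (-1 : ℚ) ^ (P.card - 1) * (Nat.factorial (P.card - 1) : ℚ) *
        ∏ B ∈ P, Hfun d (encF B) := by
  have h1 : QstarD d D = ∑ P ∈ Parts (TofD D),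
      (-1 : ℤ) ^ (P.card - 1) * (Nat.factorial (P.card - 1) : ℤ) *
        ∏ E ∈ P, NstarE d E := by
    rw [QstarD]
    have hiff : (∑ᶠ (P : Finset (Finset LTy)) (_ : IsPartitionOf (TofD D) P),
        (-1 : ℤ) ^ (P.card - 1) * (Nat.factorial (P.card - 1) : ℤ) *
          ∏ E ∈ P, NstarE d E)
        = ∑ᶠ P ∈ {P : Finset (Finset LTy) | IsPartitionOf (TofD D) P},
            (-1 : ℤ) ^ (P.card - 1) * (Nat.factorial (P.card - 1) : ℤ) *
              ∏ E ∈ P, NstarE d E := rfl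
    rw [hiff]
    have hset : {P : Finset (Finset LTy) | IsPartitionOf (TofD D) P}
        = ↑(Parts (TofD D)) := by
      ext P
      simp [mem_Parts]
    rw [hset, finsum_mem_coe_finset]
  rw [h1]
  push_cast
  refine Finset.sum_congr rfl fun P hP => ?_
  congr 1
  refine Finset.prod_congr rfl fun B hB => ?_
  have hne : B ≠ ∅ := by
    rw [← Finset.nonempty_iff_ne_empty]
    exact ((mem_Parts.mp hP).1 B hB).1
  rw [NstarE_eq, Hfun, if_neg (fun hc => hne (encF_eq_zero_iff.mp hc))]

end Aux5
section Aux6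

noncomputable def Vp (δ p : ℕ) : Finset (Fin p → ℕ) :=
  (Fintype.piFinset fun _ => Finset.Icc 1 δ).filter fun v => ∑ k, v k = δ

noncomputable def cst (p : ℕ) : ℚ := (-1) ^ (p - 1) / p

lemma mem_Vp {δ p : ℕ} {v : Fin p → ℕ} :
    v ∈ Vp δ p ↔ (∀ k, v k ∈ Finset.Icc 1 δ) ∧ ∑ k, v k = δ := by
  unfold Vp
  rw [Finset.mem_filter, Fintype.mem_piFinset]

/-- `QSev` as a finite double sum over length and compositions. -/
lemma QSev_eq_double (d δ : ℕ) (hδ : 1 ≤ δ) :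
    QSev d δ = ∑ p ∈ Finset.Icc 1 δ, ∑ v ∈ Vp δ p, cst p * ∏ k, NSev d (v k) := by
  classical
  have hset : {l : List ℕ | l.sum = δ ∧ ∀ i ∈ l, 0 < i}
      = ↑((Finset.Icc 1 δ).biUnion fun p => (Vp δ p).image List.ofFn) := by
    ext l
    simp only [Set.mem_setOf_eq, Finset.coe_biUnion, Finset.mem_coe,
      Finset.mem_biUnion, Finset.mem_Icc, Finset.mem_image, Set.mem_iUnion]
    constructor
    · rintro ⟨hsum, hpos⟩
      refine ⟨l.length, ⟨⟨?_, ?_⟩, l.get, ?_, List.ofFn_get l⟩⟩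
      · have h1 : l ≠ [] := by
          intro hc
          rw [hc] at hsum
          simp at hsum
          omega
        have := List.length_pos_iff.mpr h1
        omega
      · have := List.length_le_sum_of_one_le l (fun i hi => hpos i hi)
        omega
      · rw [mem_Vp]
        constructor
        · intro k
          rw [Finset.mem_Icc]
          have hmem : l.get k ∈ l := by simpa using List.get_mem l k.1 k.2
          exact ⟨hpos _ hmem, hsum ▸ List.single_le_sum (fun x _ => Nat.zero_le x) _ hmem⟩
        · have : (List.ofFn l.get).sum = ∑ k, l.get k := List.sum_ofFn
          rw [List.ofFn_get] at this
          rw [← this, hsum]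
    · rintro ⟨p, ⟨⟨hp1, hp2⟩, v, hv, rfl⟩⟩
      rw [mem_Vp] at hv
      constructor
      · rw [List.sum_ofFn]
        exact hv.2
      · intro i hi
        obtain ⟨k, rfl⟩ := List.mem_ofFn.mp hi
        have := hv.1 k
        rw [Finset.mem_Icc] at this
        omega
  have h1 : QSev d δ = ∑ l ∈ (Finset.Icc 1 δ).biUnion
      (fun p => (Vp δ p).image List.ofFn),
      (-1 : ℚ) ^ (l.length - 1) / (l.length : ℚ) * (l.map (NSev d)).prod := by
    rw [QSev]
    have hiff : (∑ᶠ (l : List ℕ) (_ : l.sum = δ ∧ ∀ i ∈ l, 0 < i),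
        (-1 : ℚ) ^ (l.length - 1) / (l.length : ℚ) * (l.map (NSev d)).prod)
        = ∑ᶠ l ∈ {l : List ℕ | l.sum = δ ∧ ∀ i ∈ l, 0 < i},
            (-1 : ℚ) ^ (l.length - 1) / (l.length : ℚ) * (l.map (NSev d)).prod := rfl
    rw [hiff, hset, finsum_mem_coe_finset]
  rw [h1, Finset.sum_biUnion]
  · refine Finset.sum_congr rfl fun p _ => ?_
    rw [Finset.sum_image (fun x hx y hy h => List.ofFn_inj.mp h)]
    refine Finset.sum_congr rfl fun v _ => ?_
    rw [List.length_ofFn, List.map_ofFn, List.prod_ofFn]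
    rfl
  · intro p hp q hq hpq
    simp only [Function.onFun]
    rw [Finset.disjoint_left]
    intro l hl hl'
    obtain ⟨v, -, rfl⟩ := Finset.mem_image.mp hl
    obtain ⟨w, -, hw⟩ := Finset.mem_image.mp hl'
    apply hpq
    rw [← (List.length_ofFn : (List.ofFn v).length = p), ← hw, List.length_ofFn]

noncomputable def DEpos (d δ : ℕ) : Finset EncT :=
  (Finset.Iic (Dmax d δ)).filter fun D => IsEncoding D ∧ 1 ≤ cogD D

lemma mem_DEpos {d δ : ℕ} {D : EncT} :
    D ∈ DEpos d δ ↔ D ≤ Dmax d δ ∧ IsEncoding D ∧ 1 ≤ cogD D := by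
  unfold DEpos
  rw [Finset.mem_filter, Finset.mem_Iic]

noncomputable def TP (d δ p : ℕ) : Finset (Fin p → EncT) :=
  (Fintype.piFinset fun _ => DEpos d δ).filter fun t => ∑ k, cogD (t k) = δ

lemma mem_TP {d δ p : ℕ} {t : Fin p → EncT} :
    t ∈ TP d δ p ↔ (∀ k, t k ∈ DEpos d δ) ∧ ∑ k, cogD (t k) = δ := by
  unfold TP
  rw [Finset.mem_filter, Fintype.mem_piFinset]

/-- step (d): compositions of Severi degrees as sums over tuples of encodings -/
lemma sum_Vp_eq_sum_TP (d δ p : ℕ) :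
    ∑ v ∈ Vp δ p, ∏ k, NSev d (v k) = ∑ t ∈ TP d δ p, ∏ k, Nd d (t k) := by
  classical
  have hmap : ∀ t ∈ TP d δ p, (fun k => cogD (t k)) ∈ Vp δ p := by
    intro t ht
    rw [mem_TP] at ht
    rw [mem_Vp]
    refine ⟨fun k => ?_, ht.2⟩
    rw [Finset.mem_Icc]
    have h1 : 1 ≤ cogD (t k) := ((mem_DEpos.mp (ht.1 k)).2).2
    have h2 : cogD (t k) ≤ ∑ j, cogD (t j) :=
      Finset.single_le_sum (f := fun j => cogD (t j)) (fun j _ => Nat.zero_le _)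
        (Finset.mem_univ k)
    omega
  rw [← Finset.sum_fiberwise_of_maps_to hmap (fun t => ∏ k, Nd d (t k))]
  refine Finset.sum_congr rfl fun v hv => ?_
  have hfib : (TP d δ p).filter (fun t => (fun k => cogD (t k)) = v)
      = Fintype.piFinset (fun k => DE d δ (v k)) := by
    ext t
    rw [Finset.mem_filter, mem_TP, Fintype.mem_piFinset, funext_iff]
    rw [mem_Vp] at hv
    constructor
    · rintro ⟨⟨h1, h2⟩, h3⟩
      intro k
      rw [mem_DE]
      obtain ⟨ha, hb, -⟩ := mem_DEpos.mp (h1 k)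
      exact ⟨ha, hb, h3 k⟩
    · intro h
      have hc : ∀ k, cogD (t k) = v k := fun k => (mem_DE.mp (h k)).2.2
      refine ⟨⟨fun k => ?_, ?_⟩, hc⟩
      · rw [mem_DEpos]
        obtain ⟨ha, hb, hcog⟩ := mem_DE.mp (h k)
        have := (Finset.mem_Icc.mp (hv.1 k)).1
        exact ⟨ha, hb, by omega⟩
      · rw [Finset.sum_congr rfl fun k _ => hc k]
        exact hv.2
  rw [hfib, ← Finset.prod_univ_sum]
  refine Finset.prod_congr rfl fun k _ => ?_
  rw [NSev_eq_sum d δ (v k) (Finset.mem_Icc.mp ((mem_Vp.mp hv).1 k)).1]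

lemma support_finsetSum_subset {ι : Type*} (s : Finset ι) (t : ι → EncT) :
    (∑ k ∈ s, t k).support ⊆ s.biUnion fun k => (t k).support := by
  classical
  induction s using Finset.cons_induction with
  | empty => simp
  | cons a s ha ih =>
    rw [Finset.sum_cons, Finset.cons_eq_insert, Finset.biUnion_insert]
    exact Finsupp.support_add.trans (Finset.union_subset_union subset_rfl ih)

end Aux6
section Aux7

lemma cogD_zero : cogD (0 : EncT) = 0 := by simp [cogD]

lemma TP_fiber (d δ p : ℕ) :
    ∑ t ∈ TP d δ p, ∏ k, Nd d (t k)
      = ∑ D ∈ DE d δ δ, ∑ t ∈ (Tup p D).filter (fun t => ∀ k, t k ≠ 0),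
          ∏ k, Nd d (t k) := by
  classical
  have hmap : ∀ t ∈ TP d δ p, (∑ k, t k) ∈ DE d δ δ := by
    intro t ht
    rw [mem_TP] at ht
    have henc : IsEncoding (∑ k, t k) := by
      intro x hx
      obtain ⟨k, -, hk⟩ := Finset.mem_biUnion.mp (support_finsetSum_subset _ _ hx)
      exact (mem_DEpos.mp (ht.1 k)).2.1 x hk
    have hcog : cogD (∑ k, t k) = δ := by
      rw [cogD_finsetSum]
      exact ht.2
    rw [mem_DE]
    refine ⟨?_, henc, hcog⟩
    refine le_Dmax fun x hx => ?_
    obtain ⟨k, -, hk⟩ := Finset.mem_biUnion.mp (support_finsetSum_subset _ _ hx)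
    have hB : x ∈ BoxF d := by
      by_contra hc
      have h0 : Dmax d δ x = 0 := by
        rw [Dmax, Finsupp.indicator_apply, dif_neg hc]
      have h1 := Finsupp.le_def.mp (mem_DEpos.mp (ht.1 k)).1 x
      have h2 := Finsupp.mem_support_iff.mp hk
      omega
    refine ⟨hB, ?_⟩
    have := le_cogD _ henc x
    omega
  rw [← Finset.sum_fiberwise_of_maps_to hmap (fun t => ∏ k, Nd d (t k))]
  refine Finset.sum_congr rfl fun D hD => ?_
  have hfib : (TP d δ p).filter (fun t => ∑ k, t k = D)
      = (Tup p D).filter (fun t => ∀ k, t k ≠ 0) := by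
    obtain ⟨hDm, hDenc, hDcog⟩ := mem_DE.mp hD
    ext t
    rw [Finset.mem_filter, Finset.mem_filter, mem_TP, mem_Tup]
    constructor
    · rintro ⟨⟨h1, h2⟩, h3⟩
      have hle : ∀ k, t k ≤ D := by
        intro k
        rw [← h3]
        exact Finset.single_le_sum (f := t) (fun j _ => zero_le) (Finset.mem_univ k)
      refine ⟨⟨hle, h3⟩, fun k hc => ?_⟩
      have := (mem_DEpos.mp (h1 k)).2.2
      rw [hc, cogD_zero] at this
      omega
    · rintro ⟨⟨h1, h2⟩, h3⟩
      have henck : ∀ k, IsEncoding (t k) := by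
        intro k x hx
        exact hDenc x (Finsupp.support_mono (h1 k) hx)
      have hcogk : ∀ k, 1 ≤ cogD (t k) := fun k => cogD_pos (t k) (henck k) (h3 k)
      refine ⟨⟨fun k => ?_, ?_⟩, h2⟩
      · rw [mem_DEpos]
        exact ⟨(h1 k).trans hDm, henck k, hcogk k⟩
      · rw [← cogD_finsetSum, h2, hDcog]
  rw [hfib]

lemma sum_tup_eq_OP (d δ p : ℕ) {D : EncT} (hD : D ∈ DE d δ δ) :
    ∑ t ∈ (Tup p D).filter (fun t => ∀ k, t k ≠ 0), ∏ k, Nd d (t k)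
      = muD D / alphaD D * ∑ E ∈ OP p (TofD D), ∏ k, Hfun d (encF (E k)) := by
  classical
  rw [M2 (Hfun d) p (TofD D), encF_TofD]
  rw [Finset.mul_sum]
  have hres : ∑ t ∈ Tup p D, muD D / alphaD D * (wt D t * ∏ k, Hfun d (t k))
      = ∑ t ∈ (Tup p D).filter (fun t => ∀ k, t k ≠ 0),
          muD D / alphaD D * (wt D t * ∏ k, Hfun d (t k)) := by
    rw [Finset.sum_filter_of_ne]
    intro t _ hne
    by_contra h
    push_neg at h
    obtain ⟨k, hk⟩ := h
    apply hne
    rw [Finset.prod_eq_zero (Finset.mem_univ k) (by rw [hk]; exact Hfun_zero d),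
      mul_zero, mul_zero]
  rw [hres]
  refine (Finset.sum_congr rfl fun t ht => ?_).symm
  rw [Finset.mem_filter, mem_Tup] at ht
  obtain ⟨⟨hle, hsum⟩, hnz⟩ := ht
  have hHf : ∀ k, Hfun d (t k) = (NZ d (t k) : ℚ) := by
    intro k
    rw [Hfun, if_neg (hnz k)]
  calc muD D / alphaD D * (wt D t * ∏ k, Hfun d (t k))
      = muD D / alphaD D * ((αn D : ℚ) / (∏ k, (αn (t k) : ℚ)) *
          ∏ k, (NZ d (t k) : ℚ)) := by
        rw [wt, Finset.prod_congr rfl fun k _ => hHf k]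
    _ = ∏ k, Nd d (t k) := by
        have hprodmu : ∏ k, muD (t k) = muD D := by
          rw [← muD_sum, hsum]
        have hprodal : ∏ k, alphaD (t k) = ∏ k, (αn (t k) : ℚ) :=
          Finset.prod_congr rfl fun k _ => alphaD_eq (t k)
        rw [Finset.prod_congr rfl fun k _ => Nd_eq d (t k),
          Finset.prod_mul_distrib, Finset.prod_div_distrib, hprodmu, hprodal,
          alphaD_eq D]
        have h1 : (αn D : ℚ) ≠ 0 := by exact_mod_cast (αn_pos D).ne'
        have h2 : (∏ k, (αn (t k) : ℚ)) ≠ 0 := prod_αn_ne_zero t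
        field_simp

lemma cst_mul_factorial {p : ℕ} (hp : 1 ≤ p) :
    cst p * (Nat.factorial p : ℚ)
      = (-1) ^ (p - 1) * (Nat.factorial (p - 1) : ℚ) := by
  obtain ⟨q, rfl⟩ : ∃ q, p = q + 1 := ⟨p - 1, by omega⟩
  rw [cst]
  simp only [Nat.add_sub_cancel, Nat.factorial_succ]
  push_cast
  have hq : (q : ℚ) + 1 ≠ 0 := by positivity
  field_simp

lemma sum_p_parts (d δ : ℕ) (hδ : 1 ≤ δ) {D : EncT} (hD : D ∈ DE d δ δ) :
    ∑ p ∈ Finset.Icc 1 δ, cst p * ∑ E ∈ OP p (TofD D), ∏ k, Hfun d (encF (E k))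
      = (QstarD d D : ℚ) := by
  classical
  obtain ⟨hDm, hDenc, hDcog⟩ := mem_DE.mp hD
  have hTne : (TofD D).Nonempty := by
    refine TofD_nonempty fun hc => ?_
    rw [hc, cogD_zero] at hDcog
    omega
  have hmap : ∀ P ∈ Parts (TofD D), P.card ∈ Finset.Icc 1 δ := by
    intro P hP
    rw [mem_Parts] at hP
    rw [Finset.mem_Icc]
    constructor
    · obtain ⟨x, hx⟩ := hTne
      obtain ⟨E, ⟨hE, -⟩, -⟩ := hP.2 x hx
      exact Finset.card_pos.mpr ⟨E, hE⟩
    · have hcT : (TofD D).card = ∑ B ∈ P, B.card := by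
        conv_lhs => rw [← hP.biUnion_eq]
        exact Finset.card_biUnion (fun B hB B' hB' h =>
          hP.pairwiseDisjoint B hB B' hB' h)
      have hcP : P.card ≤ (TofD D).card := by
        rw [hcT, Finset.card_eq_sum_ones P]
        exact Finset.sum_le_sum fun B hB => Finset.card_pos.mpr (hP.1 B hB).1
      have := card_TofD_le_cogD hDenc
      omega
  have h1 : ∀ p ∈ Finset.Icc 1 δ,
      cst p * ∑ E ∈ OP p (TofD D), ∏ k, Hfun d (encF (E k))
        = ∑ P ∈ (Parts (TofD D)).filter (fun P => P.card = p),
            (-1 : ℚ) ^ (P.card - 1) * (Nat.factorial (P.card - 1) : ℚ) *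
              ∏ B ∈ P, Hfun d (encF B) := by
    intro p hp
    rw [sum_OP_eq_parts (Hfun d) (Hfun_zero d) p, ← mul_assoc,
      cst_mul_factorial (Finset.mem_Icc.mp hp).1, Finset.mul_sum]
    refine Finset.sum_congr rfl fun P hP => ?_
    rw [(Finset.mem_filter.mp hP).2]
  rw [Finset.sum_congr rfl h1, QstarD_cast,
    Finset.sum_fiberwise_of_maps_to hmap
      (fun P => (-1 : ℚ) ^ (P.card - 1) * (Nat.factorial (P.card - 1) : ℚ) *
        ∏ B ∈ P, Hfun d (encF B))]

end Aux7
/-- The combinatorial logarithmic Severi degree refines over long-edge graphs with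
distributions: `Q^{d,δ} = ∑_{D : δ(D) = δ} Q^d(D)`. -/
theorem QSev_eq_sum_Qd (d δ : ℕ) (hd : 0 < d) (hδ : 0 < δ) :
    QSev d δ = ∑ᶠ (D : (ℕ × ℕ × ℕ × ℕ) →₀ ℕ) (_ : IsEncoding D ∧ cogD D = δ), Qd d D := by
  rw [QSev_eq_double d δ hδ, Qd_eq_sum d δ]
  have hstep : ∀ p ∈ Finset.Icc 1 δ, (∑ v ∈ Vp δ p, cst p * ∏ k, NSev d (v k))
      = ∑ D ∈ DE d δ δ, cst p * ∑ t ∈ (Tup p D).filter (fun t => ∀ k, t k ≠ 0),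
          ∏ k, Nd d (t k) := by
    intro p _
    rw [← Finset.mul_sum, sum_Vp_eq_sum_TP d δ p, TP_fiber d δ p, Finset.mul_sum]
  rw [Finset.sum_congr rfl hstep, Finset.sum_comm]
  refine Finset.sum_congr rfl fun D hD => ?_
  have h2 : ∀ p ∈ Finset.Icc 1 δ,
      cst p * ∑ t ∈ (Tup p D).filter (fun t => ∀ k, t k ≠ 0), ∏ k, Nd d (t k)
        = muD D / alphaD D *
            (cst p * ∑ E ∈ OP p (TofD D), ∏ k, Hfun d (encF (E k))) := by
    intro p _
    rw [sum_tup_eq_OP d δ p hD]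
    ring
  rw [Finset.sum_congr rfl h2, ← Finset.mul_sum, sum_p_parts d δ hδ hD, Qd]
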